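/- Any maximal positive solution r of the ODE r r'' = r² + 2(r')² + r²(r² + (r')²) is defined on an interval (a,b) of length strictly less than π. -/

import Mathlib

/-- `r` (with derivatives `r'`, `r''`) is a positive solution of the ODE
`r r'' = r² + 2 r'² + r² (r² + r'²)` on the open interval `(a,b)`. -/
def SolOn (r r' r'' : ℝ → ℝ) (a b : ℝ) : Prop :=
  ∀ θ ∈ Set.Ioo a b, 0 < r θ ∧ HasDerivAt r (r' θ) θ ∧ HasDerivAt r' (r'' θ) θ ∧
    r θ * r'' θ = (r θ)^2 + 2 * (r' θ)^2 + (r θ)^2 * ((r θ)^2 + (r' θ)^2)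

/-- The solution on `(a,b)` is maximal: it admits no extension to a strictly
larger open interval. -/
def MaximalSolOn (r r' r'' : ℝ → ℝ) (a b : ℝ) : Prop :=
  SolOn r r' r'' a b ∧
    ∀ (a' b' : ℝ) (ρ ρ' ρ'' : ℝ → ℝ), a' ≤ a → b ≤ b' →
      (∀ θ ∈ Set.Ioo a b, ρ θ = r θ) → SolOn ρ ρ' ρ'' a' b' → a' = a ∧ b' = b

/-- Any maximal positive solution of `r r'' = r² + 2 r'² + r² (r² + r'²)` is defined on
an interval of length strictly less than `π`. -/
theorem stmt8 (a b : ℝ) (hab : a < b) (r r' r'' : ℝ → ℝ)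
    (hmax : MaximalSolOn r r' r'' a b) :
    b - a < Real.pi := by
  obtain ⟨hsol, -⟩ := hmax
  set v : ℝ → ℝ := fun θ => r' θ / r θ with hv
  set f : ℝ → ℝ := fun θ => Real.arctan (v θ) - θ with hf
  have key : ∀ θ ∈ Set.Ioo a b, HasDerivAt f ((r θ)^2) θ := by
    intro θ hθ
    obtain ⟨hr, hr', hr'', hode⟩ := hsol θ hθ
    have hrne : r θ ≠ 0 := ne_of_gt hr
    have hvder : HasDerivAt v ((r'' θ * r θ - r' θ * r' θ) / (r θ)^2) θ :=
      hr''.div hr' hrne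
    have harc : HasDerivAt Real.arctan (1 / (1 + (v θ)^2)) (v θ) :=
      Real.hasDerivAt_arctan (v θ)
    have hcomp := (harc.comp θ hvder).sub (hasDerivAt_id θ)
    convert hcomp using 1
    case e'_4 => rfl
    case e'_5 => rfl
    case e'_8 => rfl
    have h1 : (0:ℝ) < 1 + (v θ)^2 := by positivity
    have h1ne : (1 + (v θ)^2) ≠ 0 := ne_of_gt h1
    simp only [hv]
    field_simp
    nlinarith [sq_nonneg (r θ), sq_nonneg (r' θ), sq_nonneg (r θ * r' θ), hr,
      mul_pos hr hr]
  have hcont : ContinuousOn f (Set.Ioo a b) :=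
    fun θ hθ => (key θ hθ).continuousAt.continuousWithinAt
  have hmono : StrictMonoOn f (Set.Ioo a b) := by
    apply strictMonoOn_of_deriv_pos (convex_Ioo a b) hcont
    intro θ hθ
    rw [interior_Ioo] at hθ
    rw [(key θ hθ).deriv]
    exact pow_pos (hsol θ hθ).1 2
  set c₀ : ℝ := a + (b - a) / 3 with hc₀
  set d₀ : ℝ := a + 2 * (b - a) / 3 with hd₀
  have hc₀mem : c₀ ∈ Set.Ioo a b := by constructor <;> [skip; skip] <;> simp [hc₀] <;> linarith
  have hd₀mem : d₀ ∈ Set.Ioo a b := by constructor <;> simp [hd₀] <;> linarith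
  have hc₀d₀ : c₀ < d₀ := by simp [hc₀, hd₀]; linarith
  set δ : ℝ := f d₀ - f c₀ with hδ
  have hδpos : 0 < δ := sub_pos.mpr (hmono hc₀mem hd₀mem hc₀d₀)
  -- main estimate: for a < c < c₀ and d₀ < d < b, d - c ≤ π - δ
  have main : ∀ c d : ℝ, a < c → c < c₀ → d₀ < d → d < b → d - c ≤ Real.pi - δ := by
    intro c d hac hcc₀ hd₀d hdb
    have hcmem : c ∈ Set.Ioo a b := ⟨hac, lt_trans (lt_trans hcc₀ hc₀d₀) (lt_trans hd₀d hdb)⟩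
    have hdmem : d ∈ Set.Ioo a b := ⟨lt_trans (lt_trans hac hcc₀) (lt_trans hc₀d₀ hd₀d), hdb⟩
    have h1 : f c < f c₀ := hmono hcmem hc₀mem hcc₀
    have h2 : f d₀ < f d := hmono hd₀mem hdmem hd₀d
    have h3 : Real.arctan (v d) < Real.pi / 2 := Real.arctan_lt_pi_div_two _
    have h4 : -(Real.pi / 2) < Real.arctan (v c) := Real.neg_pi_div_two_lt_arctan _
    simp only [hf, hδ] at h1 h2 ⊢
    linarith
  have hfinal : b - a ≤ Real.pi - δ := by
    apply le_of_forall_pos_le_add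
    intro ε hε
    set m : ℝ := min (ε / 2) ((b - a) / 6) with hm
    have hmpos : 0 < m := lt_min (by linarith) (by linarith)
    have hm6 : m ≤ (b - a) / 6 := min_le_right _ _
    have hmε : m ≤ ε / 2 := min_le_left _ _
    have := main (a + m) (b - m) (by linarith) (by simp [hc₀]; linarith)
      (by simp [hd₀]; linarith) (by linarith)
    linarith
  linarith
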